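/- The filtration F_i W⁺_{1+∞} := Span_ℚ{z^m D^a : m ≥ 1, 0 ≤ a ≤ (i+2)/2} is an ascending filtration of the Lie algebra W⁺_{1+∞} compatible with the Lie bracket: [F_i, F_j] ⊆ F_{i+j}. -/

import Mathlib

noncomputable section

/-- Laurent polynomials `ℚ[z, z⁻¹]`, the faithful representation of the algebra
generated by `z`, `z⁻¹` and the Euler operator `D = z d/dz`. -/
abbrev LaurentPoly : Type := AddMonoidAlgebra ℚ ℤ

/-- Multiplication by `z`. -/
def Zop : LaurentPoly →ₗ[ℚ] LaurentPoly :=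
  LinearMap.mulLeft ℚ (AddMonoidAlgebra.single (1 : ℤ) (1 : ℚ))

/-- The Euler operator `D = z d/dz`, acting on `zⁿ` by `n • zⁿ`. -/
def Dop : LaurentPoly →ₗ[ℚ] LaurentPoly :=
  (Finsupp.lsum ℚ (fun n : ℤ => (n : ℚ) • AddMonoidAlgebra.lsingle (R := ℚ) n)).comp
    (AddMonoidAlgebra.coeffLinearEquiv ℚ).toLinearMap

/-- The filtration `F_i W⁺_{1+∞} = Span_ℚ{z^m D^a : m ≥ 1, 0 ≤ a ≤ (i+2)/2}`,
i.e. `2a ≤ i + 2`. -/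
def Wfil (i : ℤ) : Submodule ℚ (Module.End ℚ LaurentPoly) :=
  Submodule.span ℚ {w | ∃ m a : ℕ, 1 ≤ m ∧ 2 * (a : ℤ) ≤ i + 2 ∧ w = Zop ^ m * Dop ^ a}

/-! ### Auxiliary lemmas -/

lemma Dop_single (n : ℤ) (r : ℚ) : Dop (AddMonoidAlgebra.single n r) = (n:ℚ) • AddMonoidAlgebra.single n r := by
  show Finsupp.lsum ℚ _ (Finsupp.single n r) = _; erw [Finsupp.lsum_single]; rfl

lemma Zop_single (n : ℤ) (r : ℚ) : Zop (AddMonoidAlgebra.single n r) = AddMonoidAlgebra.single (1+n) r := by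
  simp only [Zop, LinearMap.mulLeft_apply]
  rw [show (AddMonoidAlgebra.single n r : LaurentPoly) = AddMonoidAlgebra.single n r from rfl]
  rw [AddMonoidAlgebra.single_mul_single, one_mul]

/-- The basic commutation relation `D z = z (D + 1)`. -/
lemma DZ : (Dop * Zop : Module.End ℚ LaurentPoly) = Zop * Dop + Zop := by
  refine AddMonoidAlgebra.lhom_ext' fun n => LinearMap.ext fun r => ?_
  show Dop (Zop (AddMonoidAlgebra.single n r)) = Zop (Dop (AddMonoidAlgebra.single n r)) + Zop (AddMonoidAlgebra.single n r)
  rw [Zop_single, Dop_single, Dop_single, map_smul, Zop_single]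
  push_cast
  module

/-- `D zⁿ = zⁿ (D + n)`. -/
lemma DZn (n : ℕ) : (Dop * Zop^n : Module.End ℚ LaurentPoly)
    = Zop^n * (Dop + (n:ℚ) • 1) := by
  induction n with
  | zero => simp
  | succ n ih =>
    rw [pow_succ, ← mul_assoc, ih, mul_assoc, mul_assoc]
    congr 1
    rw [add_mul, mul_add, smul_mul_assoc, one_mul, mul_smul_comm, mul_one, DZ]
    push_cast
    module

/-- `Dᵃ zⁿ = zⁿ (D + n)ᵃ`. -/
lemma DaZn (a n : ℕ) : (Dop^a * Zop^n : Module.End ℚ LaurentPoly)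
    = Zop^n * (Dop + (n:ℚ) • 1)^a := by
  induction a with
  | zero => simp
  | succ a ih =>
    rw [pow_succ', mul_assoc, ih, ← mul_assoc, DZn, mul_assoc, ← pow_succ']

/-- Binomial expansion of `(D + c)ᵃ`. -/
lemma binom (a : ℕ) (c : ℚ) : ((Dop + c • 1 : Module.End ℚ LaurentPoly))^a
    = ∑ k ∈ Finset.range (a+1), ((a.choose k : ℚ) * c^(a-k)) • Dop^k := by
  have hc : Commute (Dop : Module.End ℚ LaurentPoly) (c • 1) := (Commute.one_right _).smul_right c
  rw [hc.add_pow]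
  refine Finset.sum_congr rfl fun k hk => ?_
  rw [smul_pow, one_pow, mul_smul_comm, smul_mul_assoc]
  rw [show ((a.choose k : ℕ) : Module.End ℚ LaurentPoly) = ((a.choose k : ℚ)) • 1 by
    rw [Nat.cast_smul_eq_nsmul, nsmul_eq_mul, mul_one]]
  rw [mul_smul_comm, mul_one, smul_smul, mul_comm, mul_one]

/-- `(D + c)ᵃ` equals `Dᵃ` plus lower-order terms in `D`. -/
lemma pow_add_smul (a : ℕ) (c : ℚ) : ((Dop + c • 1 : Module.End ℚ LaurentPoly))^a
    = Dop^a + ∑ k ∈ Finset.range a, ((a.choose k : ℚ) * c^(a-k)) • Dop^k := by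
  rw [binom, Finset.sum_range_succ, Nat.choose_self, Nat.sub_self]
  simp [add_comm]

/-- `(zᵐ Dᵃ)(zⁿ Dᵇ) = z^{m+n} (D+n)ᵃ Dᵇ`. -/
lemma gen_mul (m a n b : ℕ) :
    ((Zop^m * Dop^a) * (Zop^n * Dop^b) : Module.End ℚ LaurentPoly)
    = Zop^(m+n) * ((Dop + (n:ℚ) • 1)^a * Dop^b) := by
  calc (Zop^m * Dop^a) * (Zop^n * Dop^b)
      = Zop^m * ((Dop^a * Zop^n) * Dop^b) := by noncomm_ring
    _ = Zop^m * ((Zop^n * (Dop + (n:ℚ) • 1)^a) * Dop^b) := by rw [DaZn]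
    _ = Zop^(m+n) * ((Dop + (n:ℚ) • 1)^a * Dop^b) := by rw [pow_add]; noncomm_ring

/-- The commutator of two generators: the top-degree terms in `D` cancel. -/
lemma gen_bracket (m a n b : ℕ) :
    ((Zop^m * Dop^a) * (Zop^n * Dop^b) - (Zop^n * Dop^b) * (Zop^m * Dop^a) :
      Module.End ℚ LaurentPoly)
    = (∑ k ∈ Finset.range a, ((a.choose k : ℚ) * (n:ℚ)^(a-k)) • (Zop^(m+n) * Dop^(k+b)))
    - (∑ k ∈ Finset.range b, ((b.choose k : ℚ) * (m:ℚ)^(b-k)) • (Zop^(m+n) * Dop^(k+a))) := by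
  rw [gen_mul, gen_mul, pow_add_smul, pow_add_smul,
    show n + m = m + n from Nat.add_comm n m]
  rw [add_mul, add_mul, mul_add, mul_add, Finset.sum_mul, Finset.sum_mul,
    Finset.mul_sum, Finset.mul_sum]
  simp only [smul_mul_assoc, mul_smul_comm, ← pow_add]
  rw [show b + a = a + b from Nat.add_comm b a]
  abel

lemma gen_bracket_mem (i j : ℤ) (m a n b : ℕ) (hm : 1 ≤ m) (hn : 1 ≤ n)
    (ha : 2 * (a:ℤ) ≤ i + 2) (hb : 2 * (b:ℤ) ≤ j + 2) :
    ((Zop^m * Dop^a) * (Zop^n * Dop^b) - (Zop^n * Dop^b) * (Zop^m * Dop^a) :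
      Module.End ℚ LaurentPoly) ∈ Wfil (i + j) := by
  rw [gen_bracket]
  refine Submodule.sub_mem _ ?_ ?_
  · refine Submodule.sum_mem _ fun k hk => Submodule.smul_mem _ _ ?_
    refine Submodule.subset_span ⟨m + n, k + b, by omega, ?_, rfl⟩
    rw [Finset.mem_range] at hk
    push_cast
    omega
  · refine Submodule.sum_mem _ fun k hk => Submodule.smul_mem _ _ ?_
    refine Submodule.subset_span ⟨m + n, k + a, by omega, ?_, rfl⟩
    rw [Finset.mem_range] at hk
    push_cast
    omega

/-- The filtration `F_i W⁺_{1+∞} := Span_ℚ{z^m D^a : m ≥ 1, 0 ≤ a ≤ (i+2)/2}` is an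
ascending filtration of the Lie algebra `W⁺_{1+∞}` compatible with the Lie bracket:
`[F_i, F_j] ⊆ F_{i+j}`. -/
theorem Wfil_ascending_and_bracket_compatible :
    (∀ i j : ℤ, i ≤ j → Wfil i ≤ Wfil j) ∧
    (∀ i j : ℤ, ∀ x ∈ Wfil i, ∀ y ∈ Wfil j, ⁅x, y⁆ ∈ Wfil (i + j)) := by
  constructor
  · intro i j hij
    apply Submodule.span_mono
    rintro w ⟨m, a, hm, ha, rfl⟩
    exact ⟨m, a, hm, by omega, rfl⟩
  · intro i j x hx y hy
    induction hx using Submodule.span_induction generalizing y with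
    | mem x hxg =>
      induction hy using Submodule.span_induction with
      | mem y hyg =>
        obtain ⟨m, a, hm, ha, rfl⟩ := hxg
        obtain ⟨n, b, hn, hb, rfl⟩ := hyg
        rw [Ring.lie_def]
        exact gen_bracket_mem i j m a n b hm hn ha hb
      | zero => simp [Ring.lie_def]
      | add u v hu hv ihu ihv =>
        rw [Ring.lie_def] at *; convert Submodule.add_mem _ ihu ihv using 1; noncomm_ring
      | smul c u hu ihu =>
        rw [Ring.lie_def] at *; convert Submodule.smul_mem _ c ihu using 1; simp only [mul_smul_comm, smul_mul_assoc, smul_sub]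
    | zero => simp [Ring.lie_def]
    | add u v hu hv ihu ihv =>
      have h1 := ihu y hy; have h2 := ihv y hy
      rw [Ring.lie_def] at *; convert Submodule.add_mem _ h1 h2 using 1; noncomm_ring
    | smul c u hu ihu =>
      have h1 := ihu y hy
      rw [Ring.lie_def] at *; convert Submodule.smul_mem _ c h1 using 1; simp only [mul_smul_comm, smul_mul_assoc, smul_sub]
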